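/- Let f(t) = ∑_{n∈ℤ} a_n t^n be a Laurent polynomial with integer coefficients such that f(z) is a nonnegative real number for every z ∈ ℂ with |z| = 1, and such that a_0 = 1. Then f is the constant Laurent polynomial 1. -/

import Mathlib

set_option maxHeartbeats 1000000

open LaurentPolynomial ComplexOrder

/-- The value of an integral Laurent polynomial `f = ∑ aₙ tⁿ` at a complex number
`z ≠ 0`. -/
noncomputable def evalCircle (f : LaurentPolynomial ℤ) (z : ℂ) : ℂ :=
  Finsupp.sum f.coeff fun n c => (c : ℂ) * z ^ n

/-- The coefficient `aₙ` of an integral Laurent polynomial `f = ∑ aₙ tⁿ`. -/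
def coeffL (f : LaurentPolynomial ℤ) (n : ℤ) : ℤ := (f.coeff : ℤ →₀ ℤ) n

noncomputable def zetaC (N : ℕ) : ℂ := Complex.exp (2 * Real.pi * Complex.I / N)

lemma zetaC_ne_zero (N : ℕ) : zetaC N ≠ 0 := Complex.exp_ne_zero _

lemma abs_zetaC (N : ℕ) : ‖zetaC N‖ = 1 := by
  rw [zetaC, Complex.norm_exp]
  have : (2 * Real.pi * Complex.I / N).re = 0 := by
    simp [Complex.div_re, Complex.mul_re]
  rw [this, Real.exp_zero]

lemma abs_zetaC_zpow (N : ℕ) (k : ℤ) : ‖zetaC N ^ k‖ = 1 := by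
  rw [norm_zpow, abs_zetaC, one_zpow]

lemma conj_zetaC_zpow (N : ℕ) (k : ℤ) :
    (starRingEnd ℂ) (zetaC N ^ k) = zetaC N ^ (-k) := by
  rw [map_zpow₀, zetaC, ← Complex.exp_conj]
  have : (starRingEnd ℂ) (2 * Real.pi * Complex.I / N) = -(2 * Real.pi * Complex.I / N) := by
    simp [map_div₀, Complex.conj_I, map_ofNat]
    ring
  rw [this, Complex.exp_neg, inv_zpow, ← zpow_neg]

lemma sum_zetaC_zpow (N : ℕ) (hN : N ≠ 0) (k : ℤ) :
    ∑ j ∈ Finset.range N, zetaC N ^ ((j : ℤ) * k)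
      = if (N : ℤ) ∣ k then (N : ℂ) else 0 := by
  have hprim : IsPrimitiveRoot (zetaC N) N := Complex.isPrimitiveRoot_exp N hN
  have hpow : ∀ j : ℕ, zetaC N ^ ((j : ℤ) * k) = (zetaC N ^ k) ^ j := by
    intro j
    rw [mul_comm, zpow_mul, zpow_natCast]
  simp_rw [hpow]
  by_cases h : (N : ℤ) ∣ k
  · have h1 : zetaC N ^ k = 1 := (hprim.zpow_eq_one_iff_dvd k).mpr h
    simp [h1, if_pos h]
  · have h1 : zetaC N ^ k ≠ 1 := fun hc => h ((hprim.zpow_eq_one_iff_dvd k).mp hc)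
    rw [if_neg h, geom_sum_eq h1]
    have hN1 : (zetaC N ^ k) ^ N = 1 := by
      rw [← zpow_natCast, ← zpow_mul, mul_comm, zpow_mul, hprim.zpow_eq_one, one_zpow]
    rw [hN1]
    simp

lemma key (f : LaurentPolynomial ℤ) (N : ℕ) (hN : N ≠ 0) (k : ℤ)
    (hk : ∀ m : ℤ, f.coeff m ≠ 0 → (N : ℤ) ∣ (m - k) → m = k) :
    ∑ j ∈ Finset.range N, evalCircle f (zetaC N ^ (j : ℕ)) * zetaC N ^ (-(j : ℤ) * k)
      = (N : ℂ) * (coeffL f k : ℤ) := by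
  have step : ∀ j ∈ Finset.range N,
      evalCircle f (zetaC N ^ (j : ℕ)) * zetaC N ^ (-(j : ℤ) * k)
        = ∑ m ∈ f.coeff.support, (f.coeff m : ℂ) * zetaC N ^ ((j : ℤ) * (m - k)) := by
    intro j _
    rw [evalCircle, Finsupp.sum, Finset.sum_mul]
    refine Finset.sum_congr rfl fun m _ => ?_
    rw [mul_assoc]
    congr 1
    rw [← zpow_natCast (zetaC N) j, ← zpow_mul, ← zpow_add₀ (zetaC_ne_zero N)]
    congr 1
    ring
  rw [Finset.sum_congr rfl step, Finset.sum_comm]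
  have inner : ∀ m ∈ f.coeff.support,
      ∑ j ∈ Finset.range N, (f.coeff m : ℂ) * zetaC N ^ ((j : ℤ) * (m - k))
        = if m = k then (N : ℂ) * (f.coeff m : ℂ) else 0 := by
    intro m hm
    rw [← Finset.mul_sum, sum_zetaC_zpow N hN]
    by_cases hmk : m = k
    · simp [hmk, mul_comm]
    · rw [if_neg fun hd => hmk (hk m (Finsupp.mem_support_iff.mp hm) hd), if_neg hmk, mul_zero]
  rw [Finset.sum_congr rfl inner, Finset.sum_ite_eq' (f.coeff.support) k
    (fun m => (N : ℂ) * (f.coeff m : ℂ))]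
  by_cases hks : k ∈ f.coeff.support
  · simp [hks, coeffL]
  · simp [hks, coeffL, Finsupp.notMem_support_iff.mp hks]

lemma sq_eq_one_of_abs_re (z : ℂ) (h1 : ‖z‖ = 1) (h2 : z.re ^ 2 = 1) :
    z ^ 2 = 1 := by
  have hsq := Complex.sq_norm z
  rw [h1, Complex.normSq_apply] at hsq
  have him : z.im = 0 := by nlinarith [sq_nonneg z.im, hsq]
  have hz : z = (z.re : ℂ) := by
    apply Complex.ext <;> simp [him]
  rw [hz, ← Complex.ofReal_pow, h2, Complex.ofReal_one]

/-- Proposition 5.6: an integral Laurent polynomial which takes nonnegative real values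
on the unit circle and has constant coefficient `1` is the constant `1` (i.e. the
circle group has no S-character other than `1`). -/
theorem stmt_12 (f : LaurentPolynomial ℤ)
    (hpos : ∀ z : ℂ, ‖z‖ = 1 → 0 ≤ evalCircle f z)
    (h0 : coeffL f 0 = 1) :
    f = 1 := by
  have hmain : ∀ n : ℤ, n ≠ 0 → coeffL f n = 0 := by
    intro n hn0
    by_contra han
    set a : ℤ →₀ ℤ := f.coeff with ha
    set D : ℕ := a.support.sup (fun m => m.natAbs) with hD
    set B : ℕ := ∑ m ∈ a.support, (a m).natAbs with hB
    have hnsupp : n ∈ a.support := Finsupp.mem_support_iff.mpr han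
    have hnD : n.natAbs ≤ D := Finset.le_sup (f := fun m => m.natAbs) hnsupp
    have hnn1 : 1 ≤ n.natAbs := Nat.one_le_iff_ne_zero.mpr (Int.natAbs_ne_zero.mpr hn0)
    set N : ℕ := 2 * n.natAbs * (D + B + 1) + 1 with hN
    have hNkey : 1 * (D + B + 1) ≤ n.natAbs * (D + B + 1) :=
      Nat.mul_le_mul_right _ hnn1
    have hNkey2 : 2 * n.natAbs * (D + B + 1) = 2 * (n.natAbs * (D + B + 1)) := by ring
    have hNbig : 2 * D < N ∧ B < N ∧ N ≠ 0 := by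
      constructor
      · omega
      constructor
      · omega
      · omega
    obtain ⟨h2D, hBN, hNne⟩ := hNbig
    have hprim : IsPrimitiveRoot (zetaC N) N := Complex.isPrimitiveRoot_exp N hNne
    have hcop2 : Nat.Coprime N 2 := by
      have : N = 1 + 2 * (n.natAbs * (D + B + 1)) := by rw [hN]; ring
      rw [this]
      exact (Nat.coprime_add_mul_left_left 1 2 _).mpr (Nat.coprime_one_left 2)
    have hcopn : Nat.Coprime N n.natAbs := by
      have : N = 1 + n.natAbs * (2 * (D + B + 1)) := by rw [hN]; ring
      rw [this]
      exact (Nat.coprime_add_mul_left_left 1 n.natAbs _).mpr (Nat.coprime_one_left n.natAbs)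
    have hdvd_j : ∀ j : ℕ, j < N → (N : ℤ) ∣ 2 * (j : ℤ) * n → j = 0 := by
      intro j hj hd
      have hd' : N ∣ 2 * j * n.natAbs := by
        have h1 := Int.natAbs_dvd_natAbs.mpr hd
        simpa [Int.natAbs_mul] using h1
      have h2 : N ∣ 2 * j := hcopn.dvd_of_dvd_mul_right hd'
      have h3 : N ∣ j := by
        rw [mul_comm] at h2
        exact hcop2.dvd_of_dvd_mul_right h2
      exact Nat.eq_zero_of_dvd_of_lt h3 hj
    -- coefficient extraction
    have hkey : ∀ k : ℤ, k.natAbs ≤ D →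
        ∑ j ∈ Finset.range N, evalCircle f (zetaC N ^ (j : ℕ)) * zetaC N ^ (-(j : ℤ) * k)
          = (N : ℂ) * (coeffL f k : ℤ) := by
      intro k hkD
      refine key f N hNne k fun m hm hd => ?_
      by_contra hmk
      have hmD : m.natAbs ≤ D :=
        Finset.le_sup (f := fun m => m.natAbs) (Finsupp.mem_support_iff.mpr hm)
      have hne : m - k ≠ 0 := fun h => hmk (by omega)
      have hle := Int.le_of_dvd (abs_pos.mpr hne) ((dvd_abs _ _).mpr hd)
      rw [Int.abs_eq_natAbs] at hle
      omega
    set b : ℕ → ℂ := fun j => evalCircle f (zetaC N ^ (j : ℕ)) with hbdef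
    have habsj : ∀ j : ℕ, ‖zetaC N ^ (j : ℕ)‖ = 1 := by
      intro j; rw [norm_pow, abs_zetaC, one_pow]
    have hbpos : ∀ j : ℕ, 0 ≤ b j := fun j => hpos _ (habsj j)
    set r : ℕ → ℝ := fun j => (b j).re with hrdef
    have hrpos : ∀ j : ℕ, 0 ≤ r j := by
      intro j
      have := hbpos j
      rw [Complex.le_def] at this
      simpa using this.1
    have hbr : ∀ j : ℕ, b j = ((r j : ℝ) : ℂ) := by
      intro j
      have := hbpos j
      rw [Complex.le_def] at this
      apply Complex.ext
      · simp [hrdef]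
      · simp [hrdef, ← this.2]
    -- k = 0
    have hS0 : ∑ j ∈ Finset.range N, b j = (N : ℂ) := by
      have h := hkey 0 (by simp)
      rw [h0] at h
      simpa using h
    have hsumr : ∑ j ∈ Finset.range N, r j = (N : ℝ) := by
      have := congrArg Complex.re hS0
      rw [Complex.re_sum] at this
      simpa using this
    -- k = n and k = -n
    have hSn := hkey n hnD
    have hSmn : ∑ j ∈ Finset.range N, b j * zetaC N ^ ((j : ℤ) * n)
        = (N : ℂ) * (coeffL f (-n) : ℤ) := by
      have h := hkey (-n) (by simpa using hnD)
      simpa using h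
    -- a (-n) = a n
    have hsym : coeffL f (-n) = coeffL f n := by
      have hc := congrArg (starRingEnd ℂ) hSn
      rw [map_sum] at hc
      have hlhs : ∀ j ∈ Finset.range N,
          (starRingEnd ℂ) (b j * zetaC N ^ (-(j : ℤ) * n)) = b j * zetaC N ^ ((j : ℤ) * n) := by
        intro j _
        rw [map_mul, conj_zetaC_zpow, hbr j, Complex.conj_ofReal, neg_mul, neg_neg]
      rw [Finset.sum_congr rfl hlhs, hSmn] at hc
      have hrhs : (starRingEnd ℂ) ((N : ℂ) * (coeffL f n : ℤ)) = (N : ℂ) * (coeffL f n : ℤ) := by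
        rw [map_mul, map_natCast, map_intCast]
      rw [hrhs] at hc
      have hN0 : (N : ℂ) ≠ 0 := Nat.cast_ne_zero.mpr hNne
      have := mul_left_cancel₀ hN0 hc
      exact_mod_cast this
    -- |a n| ≤ 1
    have habs1 : coeffL f n = 1 ∨ coeffL f n = -1 := by
      have hle : ‖(N : ℂ) * (coeffL f n : ℤ)‖ ≤ (N : ℝ) := by
        rw [← hSn]
        calc ‖∑ j ∈ Finset.range N, b j * zetaC N ^ (-(j : ℤ) * n)‖
            ≤ ∑ j ∈ Finset.range N, ‖b j * zetaC N ^ (-(j : ℤ) * n)‖ :=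
              norm_sum_le _ _
          _ = ∑ j ∈ Finset.range N, r j := by
              refine Finset.sum_congr rfl fun j _ => ?_
              rw [norm_mul, abs_zetaC_zpow, mul_one, hbr j, Complex.norm_real, Real.norm_eq_abs,
                abs_of_nonneg (hrpos j)]
          _ = (N : ℝ) := hsumr
      rw [norm_mul, Complex.norm_natCast, Complex.norm_intCast] at hle
      have hN0 : (0 : ℝ) < (N : ℝ) := by positivity
      have h1 : |((coeffL f n : ℤ) : ℝ)| ≤ 1 := by
        nlinarith
      have h2 : |coeffL f n| ≤ 1 := by exact_mod_cast h1
      rw [Int.abs_eq_natAbs] at h2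
      have han' : coeffL f n ≠ 0 := han
      omega
    set ε : ℝ := ((coeffL f n : ℤ) : ℝ) with hεdef
    have hε2 : ε * ε = 1 := by
      rcases habs1 with h | h <;> rw [hεdef, h] <;> norm_num
    -- real part identity
    have hre : ∑ j ∈ Finset.range N, r j * (zetaC N ^ ((j : ℤ) * n)).re = (N : ℝ) * ε := by
      have hc := congrArg Complex.re hSmn
      rw [Complex.re_sum] at hc
      have hl : ∀ j ∈ Finset.range N,
          (b j * zetaC N ^ ((j : ℤ) * n)).re = r j * (zetaC N ^ ((j : ℤ) * n)).re := by
        intro j _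
        rw [hbr j, Complex.re_ofReal_mul]
      rw [Finset.sum_congr rfl hl, hsym] at hc
      rw [hc]
      simp [hεdef, Complex.mul_re]
    -- each term of T is nonneg
    have hRebd : ∀ j : ℕ, |(zetaC N ^ ((j : ℤ) * n)).re| ≤ 1 := by
      intro j
      calc |(zetaC N ^ ((j : ℤ) * n)).re| ≤ ‖zetaC N ^ ((j : ℤ) * n)‖ :=
            Complex.abs_re_le_norm _
        _ = 1 := abs_zetaC_zpow N _
    have hterm : ∀ j ∈ Finset.range N,
        0 ≤ r j * (1 - ε * (zetaC N ^ ((j : ℤ) * n)).re) := by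
      intro j _
      have h1 := abs_le.mp (hRebd j)
      have h2 := hrpos j
      rcases habs1 with h | h <;> rw [hεdef, h] <;> push_cast <;> nlinarith
    have hT0 : ∑ j ∈ Finset.range N,
        r j * (1 - ε * (zetaC N ^ ((j : ℤ) * n)).re) = 0 := by
      have expand : ∀ j ∈ Finset.range N,
          r j * (1 - ε * (zetaC N ^ ((j : ℤ) * n)).re)
            = r j - ε * (r j * (zetaC N ^ ((j : ℤ) * n)).re) := by
        intro j _; ring
      rw [Finset.sum_congr rfl expand, Finset.sum_sub_distrib, ← Finset.mul_sum, hsumr, hre]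
      nlinarith
    have hzero := (Finset.sum_eq_zero_iff_of_nonneg hterm).mp hT0
    -- r j = 0 for j ≠ 0
    have hrj0 : ∀ j ∈ Finset.range N, j ≠ 0 → r j = 0 := by
      intro j hj hjne
      by_contra hrj
      have hz := hzero j hj
      have h1 : 1 - ε * (zetaC N ^ ((j : ℤ) * n)).re = 0 := by
        rcases mul_eq_zero.mp hz with h | h
        · exact absurd h hrj
        · exact h
      have hReε : (zetaC N ^ ((j : ℤ) * n)).re = ε := by
        linear_combination (-ε) * h1 + (-(zetaC N ^ ((j : ℤ) * n)).re) * hε2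
      have hre2 : (zetaC N ^ ((j : ℤ) * n)).re ^ 2 = 1 := by
        rw [hReε, sq]; exact hε2
      have hsq := sq_eq_one_of_abs_re _ (abs_zetaC_zpow N ((j : ℤ) * n)) hre2
      have hdvd : (N : ℤ) ∣ 2 * (j : ℤ) * n := by
        rw [← hprim.zpow_eq_one_iff_dvd]
        rw [show 2 * (j : ℤ) * n = ((j : ℤ) * n) * ((2 : ℕ) : ℤ) by push_cast; ring,
          zpow_mul, zpow_natCast]
        exact hsq
      exact hjne (hdvd_j j (Finset.mem_range.mp hj) hdvd)
    -- conclude r 0 = N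
    have h0mem : (0 : ℕ) ∈ Finset.range N := Finset.mem_range.mpr (by omega)
    have hr0 : r 0 = (N : ℝ) := by
      rw [← hsumr]
      exact (Finset.sum_eq_single_of_mem 0 h0mem fun j hj hne => hrj0 j hj hne).symm
    -- but r 0 = sum of coefficients ≤ B < N
    have hev1 : evalCircle f 1 = ((∑ m ∈ a.support, a m : ℤ) : ℂ) := by
      rw [evalCircle, Finsupp.sum]
      push_cast
      refine Finset.sum_congr rfl fun m _ => ?_
      rw [one_zpow, mul_one]
    have hb0 : b 0 = ((∑ m ∈ a.support, a m : ℤ) : ℂ) := by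
      rw [hbdef]
      simp only [pow_zero]
      exact hev1
    have hr0' : ((∑ m ∈ a.support, a m : ℤ) : ℝ) = (N : ℝ) := by
      rw [← hr0, hrdef]
      simp [hb0]
    have hsum_eq : (∑ m ∈ a.support, a m : ℤ) = (N : ℤ) := by
      have h2 : ((∑ m ∈ a.support, a m : ℤ) : ℝ) = (((N : ℤ)) : ℝ) := by
        rw [hr0']
        norm_cast
      exact Int.cast_injective h2
    have hsum_le : (∑ m ∈ a.support, a m : ℤ) ≤ (B : ℤ) := by
      rw [hB]
      push_cast
      exact Finset.sum_le_sum fun m _ => le_abs_self _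
    have : (N : ℤ) ≤ (B : ℤ) := hsum_eq ▸ hsum_le
    omega
  -- final assembly
  have h1def : (1 : LaurentPolynomial ℤ).coeff = Finsupp.single 0 1 := rfl
  refine LaurentPolynomial.ext fun m => ?_
  rw [h1def, Finsupp.single_apply]
  by_cases hm : m = 0
  · subst hm
    simpa [coeffL] using h0
  · rw [if_neg (Ne.symm hm)]
    exact hmain m hm
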